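/- Let p ∈ (0,1], let g_p be the inverse of f_p(s) = (1/2) Σ_{n≥0} s^n/(1+pn) (extended by 0 on [0,1/2]), and define d_p(t) = t - g_p(t) - t(1-g_p(t))^2. If a pair of strictly increasing C^1 functions (g,d): [1/2,∞) → [0,1)×[0,∞) satisfies g(1/2)=d(1/2)=0, g'(t) = 2p·g(t)(1-g(t))^2/(1-2t+g(t)+2d(t)) and d'(t) = 2(1-p)g(t)(1-g(t)) + g(t)^2 for t > 1/2, then g = g_p and d = d_p on [1/2,∞). -/

import Mathlib

open Real Set


lemma pn_pos (p : ℝ) (hp : 0 < p) (n : ℕ) : 0 < 1 + p * n := by positivity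

lemma fseries_summable (p : ℝ) (hp : 0 < p) {s : ℝ} (h0 : 0 ≤ s) (h1 : s < 1) :
    Summable (fun n : ℕ => s ^ n / (1 + p * n)) := by
  refine Summable.of_nonneg_of_le (fun n => by positivity) (fun n => ?_)
    (summable_geometric_of_lt_one h0 h1)
  have := pn_pos p hp n
  exact div_le_self (by positivity) (by nlinarith)

lemma fderiv_aux (p : ℝ) (hp : 0 < p) {s : ℝ} (hs : |s| < 1) :
    HasDerivAt (fun x : ℝ => ∑' n : ℕ, x ^ n / (1 + p * n))
      (∑' n : ℕ, (n : ℝ) * s ^ (n - 1) / (1 + p * n)) s := by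
  set r : ℝ := (|s| + 1) / 2 with hrdef
  have habs : 0 ≤ |s| := abs_nonneg s
  have hr0 : 0 < r := by positivity
  have hr1 : r < 1 := by rw [hrdef]; linarith
  have hsr : |s| < r := by rw [hrdef]; linarith
  have hu : Summable (fun n : ℕ => (n : ℝ) * r ^ (n - 1)) := by
    have h := (summable_pow_mul_geometric_of_norm_lt_one 1
      (r := r) (by rwa [Real.norm_eq_abs, abs_of_pos hr0])).mul_left r⁻¹
    refine h.congr fun n => ?_
    cases n with
    | zero => simp
    | succ m =>
      have : r ≠ 0 := ne_of_gt hr0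
      simp only [pow_succ, Nat.add_sub_cancel, pow_one]
      field_simp
  refine hasDerivAt_tsum_of_isPreconnected (g := fun (n : ℕ) (x : ℝ) => x ^ n / (1 + p * n))
    (g' := fun (n : ℕ) (x : ℝ) => (n : ℝ) * x ^ (n - 1) / (1 + p * n)) hu isOpen_Ioo
    ((convex_Ioo (-r) r).isPreconnected) (fun n y _ => ?_) (fun n y hy => ?_)
    (y₀ := 0) ⟨by linarith, hr0⟩ ?_ (abs_lt.mp hsr)
  · exact (hasDerivAt_pow n y).div_const (1 + p * n)
  · have hyr : |y| < r := abs_lt.mpr ⟨hy.1, hy.2⟩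
    have hpn := pn_pos p hp n
    rw [Real.norm_eq_abs, abs_div, abs_of_pos hpn, abs_mul, Nat.abs_cast, abs_pow]
    have h1 : |y| ^ (n - 1) ≤ r ^ (n - 1) := pow_le_pow_left₀ (abs_nonneg y) hyr.le _
    calc (n : ℝ) * |y| ^ (n - 1) / (1 + p * n) ≤ (n : ℝ) * r ^ (n - 1) / (1 + p * n) := by
          gcongr
      _ ≤ (n : ℝ) * r ^ (n - 1) := div_le_self (by positivity) (by nlinarith)
  · refine summable_of_ne_finset_zero (s := {0}) fun n hn => ?_
    simp only [Finset.mem_singleton] at hn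
    show (0:ℝ) ^ n / (1 + p * n) = 0
    rw [zero_pow hn, zero_div]

lemma fkey (p : ℝ) (hp : 0 < p) {s : ℝ} (h0 : 0 < s) (h1 : s < 1) :
    p * s * (∑' n : ℕ, (n : ℝ) * s ^ (n - 1) / (1 + p * n))
      = (1 - s)⁻¹ - ∑' n : ℕ, s ^ n / (1 + p * n) := by
  have hsum1 : Summable (fun n : ℕ => s ^ n) := summable_geometric_of_lt_one h0.le h1
  have hsum2 := fseries_summable p hp h0.le h1
  have step1 : p * s * (∑' n : ℕ, (n : ℝ) * s ^ (n - 1) / (1 + p * n))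
      = ∑' n : ℕ, (s ^ n - s ^ n / (1 + p * n)) := by
    rw [← tsum_mul_left]
    refine tsum_congr fun n => ?_
    cases n with
    | zero => simp
    | succ m =>
      have hne : (1 + p * ((m : ℕ) + 1 : ℕ)) ≠ 0 := ne_of_gt (pn_pos p hp _)
      simp only [Nat.add_sub_cancel]
      push_cast at hne ⊢
      field_simp
      ring
  rw [step1, Summable.tsum_sub hsum1 hsum2, tsum_geometric_of_lt_one h0.le h1]

/-- Let `p ∈ (0,1]`, let `g_p` be the inverse of
`f_p(s) = (1/2) Σ_{n≥0} s^n/(1+pn)` on `[1/2,∞)` (extended by `0` on `[0,1/2]`) and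
`d_p(t) = t - g_p(t) - t(1-g_p(t))²`. If a pair of strictly increasing C¹ functions
`(g,d) : [1/2,∞) → [0,1)×[0,∞)` satisfies `g(1/2)=d(1/2)=0`,
`g' = 2p g(1-g)²/(1-2t+g+2d)` and `d' = 2(1-p)g(1-g)+g²` on `(1/2,∞)`, then `g = g_p`
and `d = d_p` on `[1/2,∞)`. -/
theorem system_uniqueness (p : ℝ) (hp : p ∈ Set.Ioc (0:ℝ) 1)
    (f : ℝ → ℝ) (hf : f = fun s : ℝ => (1/2) * ∑' n : ℕ, s ^ n / (1 + p * n))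
    (hbij : Set.BijOn f (Set.Ico (0:ℝ) 1) (Set.Ici (1/2 : ℝ)))
    (gp : ℝ → ℝ)
    (hgp0 : ∀ t ≤ (1/2 : ℝ), gp t = 0)
    (hgpmem : ∀ t ∈ Set.Ici (1/2 : ℝ), gp t ∈ Set.Ico (0:ℝ) 1)
    (hgpinv : ∀ t ∈ Set.Ici (1/2 : ℝ), f (gp t) = t)
    (dp : ℝ → ℝ) (hdp : dp = fun t : ℝ => t - gp t - t * (1 - gp t) ^ 2)
    (g d : ℝ → ℝ)
    (hgmono : StrictMonoOn g (Set.Ici (1/2 : ℝ)))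
    (hdmono : StrictMonoOn d (Set.Ici (1/2 : ℝ)))
    (hgmem : ∀ t ∈ Set.Ici (1/2 : ℝ), g t ∈ Set.Ico (0:ℝ) 1)
    (hdmem : ∀ t ∈ Set.Ici (1/2 : ℝ), d t ∈ Set.Ici (0:ℝ))
    (hgc : ContinuousOn g (Set.Ici (1/2 : ℝ)))
    (hdc : ContinuousOn d (Set.Ici (1/2 : ℝ)))
    (hg0 : g (1/2) = 0) (hd0 : d (1/2) = 0)
    (hpos : ∀ t > (1/2 : ℝ), 0 < 1 - 2 * t + g t + 2 * d t)
    (hgode : ∀ t > (1/2 : ℝ),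
      HasDerivAt g (2 * p * g t * (1 - g t) ^ 2 / (1 - 2 * t + g t + 2 * d t)) t)
    (hdode : ∀ t > (1/2 : ℝ),
      HasDerivAt d (2 * (1 - p) * g t * (1 - g t) + g t ^ 2) t) :
    ∀ t ∈ Set.Ici (1/2 : ℝ), g t = gp t ∧ d t = dp t := by
  obtain ⟨hp0, hp1⟩ := hp
  have half_mem : (1/2 : ℝ) ∈ Ici (1/2 : ℝ) := self_mem_Ici
  have gpos : ∀ t > (1/2:ℝ), 0 < g t := by
    intro t ht
    have := hgmono half_mem (le_of_lt ht) ht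
    rwa [hg0] at this
  have gnn : ∀ t ∈ Ici (1/2:ℝ), 0 ≤ g t := fun t ht => (hgmem t ht).1
  have glt : ∀ t ∈ Ici (1/2:ℝ), g t < 1 := fun t ht => (hgmem t ht).2
  set E : ℝ → ℝ := fun t => d t - (t - g t - t * (1 - g t) ^ 2) with hEdef
  have hE0 : E (1/2) = 0 := by
    simp only [hEdef, hg0, hd0]
    ring
  have hEderiv : ∀ t > (1/2:ℝ), HasDerivAt E
      (-(4 * p * g t * (1 - g t) * E t) / (1 - 2 * t + g t + 2 * d t)) t := by
    intro t ht
    have hΔ := hpos t ht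
    have hΔne : (1 - 2 * t + g t + 2 * d t) ≠ 0 := ne_of_gt hΔ
    have hg' := hgode t ht
    have hin : HasDerivAt (fun u : ℝ => u - g u - u * (1 - g u) ^ 2)
        (1 - (2 * p * g t * (1 - g t) ^ 2 / (1 - 2 * t + g t + 2 * d t)) -
          (1 * (1 - g t) ^ 2 + t * ((2:ℕ) * (1 - g t) ^ (2-1) *
            (0 - (2 * p * g t * (1 - g t) ^ 2 / (1 - 2 * t + g t + 2 * d t)))))) t :=
      ((hasDerivAt_id' (x := t)).sub hg').sub
        ((hasDerivAt_id' (x := t)).mul (((hasDerivAt_const t (1:ℝ)).sub hg').pow 2))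
    have hEd : HasDerivAt E
        (2 * (1 - p) * g t * (1 - g t) + g t ^ 2 -
          (1 - (2 * p * g t * (1 - g t) ^ 2 / (1 - 2 * t + g t + 2 * d t)) -
          (1 * (1 - g t) ^ 2 + t * ((2:ℕ) * (1 - g t) ^ (2-1) *
            (0 - (2 * p * g t * (1 - g t) ^ 2 / (1 - 2 * t + g t + 2 * d t))))))) t :=
      (hdode t ht).sub hin
    have heq : (2 * (1 - p) * g t * (1 - g t) + g t ^ 2 -
          (1 - (2 * p * g t * (1 - g t) ^ 2 / (1 - 2 * t + g t + 2 * d t)) -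
          (1 * (1 - g t) ^ 2 + t * ((2:ℕ) * (1 - g t) ^ (2-1) *
            (0 - (2 * p * g t * (1 - g t) ^ 2 / (1 - 2 * t + g t + 2 * d t)))))))
        = -(4 * p * g t * (1 - g t) * E t) / (1 - 2 * t + g t + 2 * d t) := by
      simp only [hEdef]
      field_simp
      ring
    exact heq ▸ hEd
  have hEcont : ContinuousOn E (Ici (1/2:ℝ)) :=
    hdc.sub ((continuousOn_id.sub hgc).sub
      (continuousOn_id.mul ((continuousOn_const.sub hgc).pow 2)))
  have hEsq : AntitoneOn (fun t => E t ^ 2) (Ici (1/2:ℝ)) := by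
    apply antitoneOn_of_deriv_nonpos (convex_Ici _) (hEcont.pow 2)
    · intro x hx
      rw [interior_Ici] at hx
      exact (((hEderiv x hx).pow 2).differentiableAt).differentiableWithinAt
    · intro x hx
      rw [interior_Ici] at hx
      rw [((hEderiv x hx).pow 2).deriv]
      have h1 : 0 ≤ g x := gnn x (le_of_lt (mem_Ioi.mp hx))
      have h2 : g x < 1 := glt x (le_of_lt (mem_Ioi.mp hx))
      have hΔ := hpos x hx
      have key : ((2:ℕ) : ℝ) * E x ^ (2-1) *
            (-(4 * p * g x * (1 - g x) * E x) / (1 - 2 * x + g x + 2 * d x))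
          = -(8 * p * g x * (1 - g x) * E x ^ 2) / (1 - 2 * x + g x + 2 * d x) := by
        push_cast
        ring
      rw [key]
      apply div_nonpos_of_nonpos_of_nonneg _ (le_of_lt hΔ)
      have : 0 ≤ 8 * p * g x * (1 - g x) * E x ^ 2 :=
        mul_nonneg (mul_nonneg (mul_nonneg (by positivity) h1) (by linarith)) (sq_nonneg _)
      linarith
  have hEzero : ∀ t ∈ Ici (1/2:ℝ), E t = 0 := by
    intro t ht
    have h1 : E t ^ 2 ≤ E (1/2) ^ 2 := hEsq half_mem ht ht
    rw [hE0] at h1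
    have h2 : E t ^ 2 = 0 := le_antisymm (by simpa using h1) (sq_nonneg _)
    exact pow_eq_zero_iff (two_ne_zero) |>.mp h2
  have hdval : ∀ t ∈ Ici (1/2:ℝ), d t = t - g t - t * (1 - g t) ^ 2 := by
    intro t ht
    have h := hEzero t ht
    simp only [hEdef] at h
    linarith
  have hX : ∀ t > (1/2:ℝ), 0 < 1 - 2 * t * (1 - g t) := by
    intro t ht
    have hΔ := hpos t ht
    have hd := hdval t (le_of_lt ht)
    have h2 : g t < 1 := glt t (le_of_lt ht)
    nlinarith [hΔ, hd, h2]
  have hf0 : f 0 = 1/2 := by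
    rw [hf]
    have h1 : ∑' n : ℕ, (0:ℝ) ^ n / (1 + p * n) = 1 := by
      rw [tsum_eq_single 0 (fun n hn => by rw [zero_pow hn, zero_div])]
      norm_num
    simp only [h1]
    norm_num
  have hφderiv : ∀ t > (1/2:ℝ), HasDerivAt (fun u => f (g u) - u)
      (-(2 * (1 - g t) * (f (g t) - t)) / (1 - 2 * t * (1 - g t))) t := by
    intro t ht
    have hgt0 : 0 < g t := gpos t ht
    have hgt1 : g t < 1 := glt t (le_of_lt ht)
    have habs : |g t| < 1 := abs_lt.mpr ⟨by linarith, hgt1⟩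
    have hD := fderiv_aux p hp0 habs
    have hfD : HasDerivAt f
        ((1/2) * ∑' n : ℕ, (n:ℝ) * (g t) ^ (n-1) / (1 + p * n)) (g t) := by
      rw [hf]; exact hD.const_mul (1/2)
    have hchain := (hfD.comp t (hgode t ht)).sub (hasDerivAt_id' (x := t))
    have hkey := fkey p hp0 hgt0 hgt1
    have hX' := hX t ht
    have hXne : (1 - 2 * t * (1 - g t)) ≠ 0 := ne_of_gt hX'
    have hd := hdval t (le_of_lt ht)
    have hfval : f (g t) = (1/2) * ∑' n : ℕ, (g t) ^ n / (1 + p * n) := by rw [hf]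
    have h1g : (1:ℝ) - g t ≠ 0 := by linarith
    have hDval : (∑' n : ℕ, (n:ℝ) * (g t) ^ (n-1) / (1 + p * n))
        = ((1 - g t)⁻¹ - ∑' n : ℕ, (g t) ^ n / (1 + p * n)) / (p * g t) := by
      rw [eq_div_iff (by positivity)]
      linarith [hkey]
    have heq : (1/2) * (∑' n : ℕ, (n:ℝ) * (g t) ^ (n-1) / (1 + p * n)) *
          (2 * p * g t * (1 - g t) ^ 2 / (1 - 2 * t + g t + 2 * d t)) - 1
        = -(2 * (1 - g t) * (f (g t) - t)) / (1 - 2 * t * (1 - g t)) := by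
      rw [hDval, hfval, hd]
      have hΔ2 : 1 - 2 * t + g t + 2 * (t - g t - t * (1 - g t) ^ 2) ≠ 0 := by
        have : 1 - 2 * t + g t + 2 * (t - g t - t * (1 - g t) ^ 2)
            = (1 - g t) * (1 - 2 * t * (1 - g t)) := by ring
        rw [this]
        exact mul_ne_zero h1g hXne
      have hgt0' : g t ≠ 0 := ne_of_gt hgt0
      have hp' : p ≠ 0 := ne_of_gt hp0
      rw [show 1 - 2 * t + g t + 2 * (t - g t - t * (1 - g t) ^ 2)
          = (1 - g t) * (1 - 2 * t * (1 - g t)) by ring]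
      generalize hXg : 1 - 2 * t * (1 - g t) = X at hXne ⊢
      field_simp
      rw [← hXg]
      ring
    exact heq ▸ hchain
  have hφcont : ContinuousOn (fun u => f (g u) - u) (Ici (1/2:ℝ)) := by
    apply ContinuousOn.sub _ continuousOn_id
    intro t ht
    have habs : |g t| < 1 := abs_lt.mpr ⟨by linarith [gnn t ht], glt t ht⟩
    have hfD : HasDerivAt f
        ((1/2) * ∑' n : ℕ, (n:ℝ) * (g t) ^ (n-1) / (1 + p * n)) (g t) := by
      rw [hf]; exact (fderiv_aux p hp0 habs).const_mul (1/2)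
    exact (hfD.continuousAt).comp_continuousWithinAt (hgc t ht)
  have hφ0 : f (g (1/2 : ℝ)) - (1/2 : ℝ) = 0 := by rw [hg0, hf0]; norm_num
  have hφsq : AntitoneOn (fun t => (f (g t) - t) ^ 2) (Ici (1/2:ℝ)) := by
    apply antitoneOn_of_deriv_nonpos (convex_Ici _) (hφcont.pow 2)
    · intro x hx
      rw [interior_Ici] at hx
      exact (((hφderiv x hx).pow 2).differentiableAt).differentiableWithinAt
    · intro x hx
      rw [interior_Ici] at hx
      rw [((hφderiv x hx).pow 2).deriv]
      have h2 : g x < 1 := glt x (le_of_lt (mem_Ioi.mp hx))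
      have hX' := hX x hx
      have key : ((2:ℕ) : ℝ) * (f (g x) - x) ^ (2-1) *
            (-(2 * (1 - g x) * (f (g x) - x)) / (1 - 2 * x * (1 - g x)))
          = -(4 * (1 - g x) * (f (g x) - x) ^ 2) / (1 - 2 * x * (1 - g x)) := by
        push_cast
        ring
      rw [key]
      apply div_nonpos_of_nonpos_of_nonneg _ (le_of_lt hX')
      have : 0 ≤ 4 * (1 - g x) * (f (g x) - x) ^ 2 :=
        mul_nonneg (by linarith) (sq_nonneg _)
      linarith
  have hφzero : ∀ t ∈ Ici (1/2:ℝ), f (g t) = t := by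
    intro t ht
    have h1 : (f (g t) - t) ^ 2 ≤ (f (g (1/2:ℝ)) - (1/2:ℝ)) ^ 2 := hφsq half_mem ht ht
    rw [hφ0] at h1
    have h2 : (f (g t) - t) ^ 2 = 0 := le_antisymm (by simpa using h1) (sq_nonneg _)
    have := pow_eq_zero_iff (two_ne_zero) |>.mp h2
    linarith
  intro t ht
  have hgeq : g t = gp t :=
    hbij.injOn (hgmem t ht) (hgpmem t ht) (by rw [hφzero t ht, hgpinv t ht])
  refine ⟨hgeq, ?_⟩
  rw [hdp]
  have hdv := hdval t ht
  simp only []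
  rw [hdv, hgeq]
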